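/- Let x, y, z be natural numbers with x ≠ y and y ≠ z. Then vbit(x, y) ≠ vbit(y, z). -/
import Mathlib


open scoped Classical

/-- `lbit x y` is the least index `i` such that the `i`-th binary digits of `x` and `y`
differ (defined as `0` if `x = y`). -/
noncomputable def lbit (x y : ℕ) : ℕ :=
  if h : ∃ i, x.testBit i ≠ y.testBit i then Nat.find h else 0

/-- `vbit x y = 2 * lbit x y + a`, where `a` is the bit of `x` at position `lbit x y`. -/
noncomputable def vbit (x y : ℕ) : ℕ :=
  2 * lbit x y + (if Nat.testBit x (lbit x y) then 1 else 0)

lemma lbit_spec {x y : ℕ} (h : x ≠ y) : x.testBit (lbit x y) ≠ y.testBit (lbit x y) := by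
  have hex : ∃ i, x.testBit i ≠ y.testBit i := by
    by_contra hc
    push_neg at hc
    exact h (Nat.eq_of_testBit_eq hc)
  rw [lbit, dif_pos hex]
  exact Nat.find_spec hex

/-- If `x ≠ y` and `y ≠ z`, then `vbit x y ≠ vbit y z`. -/
theorem stmt2 (x y z : ℕ) (hxy : x ≠ y) (hyz : y ≠ z) : vbit x y ≠ vbit y z := by
  intro h
  unfold vbit at h
  have h1 := lbit_spec hxy
  have h2 := lbit_spec hyz
  have hl : lbit x y = lbit y z ∧
      (if x.testBit (lbit x y) then 1 else 0) = (if y.testBit (lbit y z) then 1 else 0) := by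
    constructor <;> split_ifs at h ⊢ <;> omega
  obtain ⟨hi, hb⟩ := hl
  rw [hi] at h1
  split_ifs at hb with ha hc <;> simp_all
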